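/- arXiv:1108.4378 — 3 statements merged into one kernel-verified Lean document; each statement's English description precedes it below -/
import Mathlib

section
/- For a symplectic dg-manifold of grade n > 0 with symplectic form ω and homological vector field v (satisfying 𝐝ω = 0 and L_v ω = 0 and [v,ε] = v where ε is the Euler vector field), the function π := (1/(n+1))·ι_ε ι_v ω is a Hamiltonian for v, i.e. 𝐝π = ι_v ω. -/
/-- For a symplectic dg-manifold of grade n > 0 with symplectic form ω and
homological vector field v, the function π := (1/(n+1))·ι_ε ι_v ω is a
Hamiltonian for v: 𝐝π = ι_v ω.  The graded Cartan calculus identities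
L_ε = [ι_ε, 𝐝], L_v = [ι_v, 𝐝] and [L_v, ι_ε] = ι_{[v,ε]} (with [v,ε] = ∓v)
are given as hypotheses on the operators. -/
theorem hamiltonian_of_homological_vector_field {Ω : Type*} [AddCommGroup Ω] [Module ℝ Ω]
    (d ιε ιv Lv Lε : Ω →ₗ[ℝ] Ω) (ω : Ω) (n : ℕ) (hn : 0 < n)
    (hLε : ∀ x, Lε x = ιε (d x) + d (ιε x))
    (hgrade : Lε ω = (n : ℝ) • ω)
    (hclosed : d ω = 0)
    (hLvω : Lv ω = 0)
    (hCartan : ∀ x, d (ιv x) = ιv (d x) - Lv x)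
    (hComm : ∀ x, Lv (ιε x) - ιε (Lv x) = - ιv x)
    (hswap : ιε (ιv ω) = ιv (ιε ω)) :
    d (((n : ℝ) + 1)⁻¹ • ιε (ιv ω)) = ιv ω := by
  have hdιε : d (ιε ω) = (n : ℝ) • ω := by
    have h := hLε ω
    rw [hclosed, map_zero, zero_add] at h
    rw [← h, hgrade]
  have hLvιε : Lv (ιε ω) = - ιv ω := by
    have h := hComm ω
    rwa [hLvω, map_zero, sub_zero] at h
  have h1 : d (ιε (ιv ω)) = ((n : ℝ) + 1) • ιv ω := by
    rw [hswap, hCartan, hdιε, hLvιε, map_smul, sub_neg_eq_add, add_smul, one_smul]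
  rw [map_smul, h1, smul_smul, inv_mul_cancel₀, one_smul]
  positivity
end

section
/- Let (P, ω) be a symplectic Lie n-algebroid for n > 0, with Weil differential d_W = 𝐝 + L_v, Euler vector field ε, and canonical Hamiltonian π = (1/(n+1))·ι_ε ι_v ω. Then the element cs := (1/n)(ι_ε ω + π) satisfies d_W(cs) = ω, i.e., cs is a Chern-Simons element transgressing ω to the cocycle (1/n)π. -/
/-- For a symplectic Lie n-algebroid (P, ω) with Weil differential d_W = 𝐝 + L_v,
Euler vector field ε and canonical Hamiltonian π (satisfying 𝐝π = ι_v ω, L_v π = 0),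
the element cs := (1/n)(ι_ε ω + π) satisfies d_W(cs) = ω, i.e. cs is a
Chern-Simons element transgressing ω to the cocycle (1/n)π. -/
theorem chern_simons_element_transgresses {Ω : Type*} [AddCommGroup Ω] [Module ℝ Ω]
    (d ιε ιv Lv Lε : Ω →ₗ[ℝ] Ω) (ω π : Ω) (n : ℕ) (hn : 0 < n)
    (hπ : d π = ιv ω)
    (hLvπ : Lv π = 0)
    (hanti : ∀ x, d (ιε x) + ιε (d x) = Lε x)
    (hgrade : Lε ω = (n : ℝ) • ω)
    (hComm : ∀ x, Lv (ιε x) - ιε (Lv x) = - ιv x)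
    (hLvω : Lv ω = 0)
    (hdω : d ω = 0) :
    d ((n : ℝ)⁻¹ • (ιε ω + π)) + Lv ((n : ℝ)⁻¹ • (ιε ω + π)) = ω := by
  have h1 : d (ιε ω) = (n : ℝ) • ω := by
    have := hanti ω
    rw [hdω, map_zero, add_zero, hgrade] at this
    exact this
  have h2 : Lv (ιε ω) = - ιv ω := by
    have := hComm ω
    rw [hLvω, map_zero, sub_zero] at this
    exact this
  have hn' : (n : ℝ) ≠ 0 := Nat.cast_ne_zero.mpr hn.ne'
  simp only [map_smul, map_add, h1, h2, hπ, hLvπ, add_zero]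
  rw [smul_add, smul_smul, inv_mul_cancel₀ hn', one_smul]
  module
end

section
/- For a symplectic Lie n-algebroid (P, ω) with global Darboux coordinates, the pullback of the canonical Chern-Simons element cs = (1/n)(Σ deg(x^a)·ω_{ab}·x^a ∧ d_W x^b − n·π) along a degree-1 P-valued differential form φ on a closed oriented (n+1)-manifold Σ, integrated over Σ, equals the AKSZ action: ∫_Σ cs(φ) = ∫_Σ ((1/2)·ω_{ab}·φ^a ∧ d φ^b − π(φ)). -/
/-- For a symplectic Lie n-algebroid with global Darboux coordinates, the integral
over a closed oriented (n+1)-manifold Σ of the canonical Chern-Simons element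
cs(φ) = (1/n)(Σ deg(x^a)·ω_{ab}·φ^a ∧ dφ^b − n·π(φ)) evaluated on a degree-1
P-valued differential form φ (φ^a := φ(x^a), φ(d_W x^a) = dφ^a) equals the AKSZ action:
∫_Σ cs(φ) = ∫_Σ ((1/2)·ω_{ab}·φ^a ∧ dφ^b − π(φ)). -/
theorem cs_integral_equals_aksz {Ω ι : Type*} [AddCommGroup Ω] [Module ℝ Ω] [Fintype ι]
    (w : Ω →ₗ[ℝ] Ω →ₗ[ℝ] Ω) (d : Ω →ₗ[ℝ] Ω) (I : Ω →ₗ[ℝ] ℝ)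
    (deg : ι → ℕ) (ωc : ι → ι → ℝ) (n : ℕ) (hn : 0 < n)
    (φ : ι → Ω) (πφ : Ω)
    (hsym : ∀ a b, ωc a b = (-1 : ℝ) ^ ((1 + deg a) * (1 + deg b)) * ωc b a)
    (hdeg : ∀ a b, ωc a b ≠ 0 → deg a + deg b = n)
    (hStokes : ∀ η, I (d η) = 0)
    (hLeib : ∀ a b, d (w (φ a) (φ b))
        = w (d (φ a)) (φ b) + (-1 : ℝ) ^ (deg a) • w (φ a) (d (φ b)))
    (hcomm : ∀ a b, w (φ a) (d (φ b))
        = (-1 : ℝ) ^ (deg a * (deg b + 1)) • w (d (φ b)) (φ a)) :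
    I ((n : ℝ)⁻¹ • ((∑ a, ∑ b, ((deg a : ℝ) * ωc a b) • w (φ a) (d (φ b))) - (n : ℝ) • πφ))
      = I ((1 / 2 : ℝ) • (∑ a, ∑ b, (ωc a b) • w (φ a) (d (φ b))) - πφ) := by
  classical
  set F : ι → ι → ℝ := fun a b => I (w (φ a) (d (φ b))) with hF
  have key : ∀ a b, ωc a b * F a b = ωc b a * F b a := by
    intro a b
    have hs : I (d (w (φ b) (φ a))) = 0 := hStokes _
    rw [hLeib b a] at hs
    simp only [map_add, map_smul, smul_eq_mul] at hs
    have h1 : F a b = (-1 : ℝ) ^ (deg a * (deg b + 1)) * I (w (d (φ b)) (φ a)) := by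
      rw [hF]; simp only []; rw [hcomm a b, map_smul, smul_eq_mul]
    have h2 : I (w (d (φ b)) (φ a)) = -((-1 : ℝ) ^ (deg b) * F b a) := by
      rw [hF]; simp only []; linarith
    have hodd : Odd ((1 + deg a) * (1 + deg b) + deg a * (deg b + 1) + deg b) :=
      ⟨deg a + deg b + deg a * deg b, by ring⟩
    have hsign : (-1 : ℝ) ^ ((1 + deg a) * (1 + deg b)) * (-1 : ℝ) ^ (deg a * (deg b + 1))
        * (-1 : ℝ) ^ (deg b) = -1 := by
      rw [← pow_add, ← pow_add]; exact Odd.neg_one_pow hodd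
    rw [hsym a b, h1, h2]
    linear_combination (-(ωc b a * F b a)) * hsign
  set S : ℝ := ∑ a, ∑ b, ωc a b * F a b with hS
  set T : ℝ := ∑ a, ∑ b, (deg a : ℝ) * (ωc a b * F a b) with hT
  have hTT : 2 * T = (n : ℝ) * S := by
    have hswap : T = ∑ a, ∑ b, (deg b : ℝ) * (ωc a b * F a b) := by
      rw [hT, Finset.sum_comm]
      exact Finset.sum_congr rfl fun b _ => Finset.sum_congr rfl fun a _ => by
        rw [key a b]
    calc 2 * T = T + T := by ring
      _ = ∑ a, ∑ b, ((deg a : ℝ) + (deg b : ℝ)) * (ωc a b * F a b) := by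
          nth_rewrite 2 [hswap]
          rw [hT, ← Finset.sum_add_distrib]
          exact Finset.sum_congr rfl fun a _ => by
            rw [← Finset.sum_add_distrib]
            exact Finset.sum_congr rfl fun b _ => by ring
      _ = ∑ a, ∑ b, (n : ℝ) * (ωc a b * F a b) := by
          refine Finset.sum_congr rfl fun a _ => Finset.sum_congr rfl fun b _ => ?_
          by_cases h : ωc a b = 0
          · simp [h]
          · have := hdeg a b h
            rw [← this]; push_cast; ring
      _ = (n : ℝ) * S := by
          rw [hS, Finset.mul_sum]
          exact Finset.sum_congr rfl fun a _ => (Finset.mul_sum _ _ _).symm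
  have hIT : I (∑ a, ∑ b, ((deg a : ℝ) * ωc a b) • w (φ a) (d (φ b))) = T := by
    rw [hT]; simp only [map_sum, map_smul, smul_eq_mul]
    exact Finset.sum_congr rfl fun a _ => Finset.sum_congr rfl fun b _ => by rw [hF]; ring
  have hIS : I (∑ a, ∑ b, (ωc a b) • w (φ a) (d (φ b))) = S := by
    rw [hS]; simp only [map_sum, map_smul, smul_eq_mul, hF]
  rw [map_smul, map_sub, map_sub, map_smul, map_smul, hIT, hIS, smul_eq_mul, smul_eq_mul,
    smul_eq_mul]
  have hn' : (n : ℝ) ≠ 0 := by positivity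
  have hT2 : T = (n : ℝ) * S / 2 := by linarith
  rw [hT2, mul_sub, inv_mul_cancel_left₀ hn', mul_div_assoc, inv_mul_cancel_left₀ hn']
  ring
end
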